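/- Let P(B,A) be a quantum principal bundle. Vertical automorphisms of P (left B-module automorphisms F : P → P with F(1) = 1 and Δ_R ∘ F = (F ⊗ id) ∘ Δ_R) are in bijective correspondence with convolution invertible linear maps f : A → P satisfying f(1) = 1 and Δ_R ∘ f = (f ⊗ id) ∘ Ad, where Ad(a) = a₂ ⊗ S(a₁)a₃. The correspondence is f ↦ id * f (u ↦ u⁽¹⁾ f(u⁽²⁾)) with inverse F ↦ mult ∘ (id ⊗_B F) ∘ τ. -/

import Mathlib

open TensorProduct

set_option synthInstance.maxHeartbeats 800000
set_option maxHeartbeats 1600000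

noncomputable section

variable (k : Type*) [Field k]

/-- Convolution product of linear maps from a coalgebra to an algebra:
`(f * g)(a) = f(a₁) g(a₂)`. -/
def conv {C B : Type*} [AddCommMonoid C] [Module k C] [Coalgebra k C]
    [Semiring B] [Algebra k B] (f g : C →ₗ[k] B) : C →ₗ[k] B :=
  LinearMap.mul' k B ∘ₗ TensorProduct.map f g ∘ₗ Coalgebra.comul

/-- The convolution unit `a ↦ ε(a) 1`. -/
def convOne {C B : Type*} [AddCommMonoid C] [Module k C] [Coalgebra k C]
    [Semiring B] [Algebra k B] : C →ₗ[k] B :=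
  Algebra.linearMap k B ∘ₗ Coalgebra.counit

section ConvLemmas

variable {k} {C B : Type*} [AddCommMonoid C] [Module k C] [Coalgebra k C]
  [Semiring B] [Algebra k B]

lemma conv_apply (f g : C →ₗ[k] B) (a : C) :
    conv k f g a = LinearMap.mul' k B (TensorProduct.map f g (Coalgebra.comul a)) := rfl

lemma convOne_apply (a : C) :
    convOne k (C := C) (B := B) a = algebraMap k B (Coalgebra.counit a) := rfl

lemma conv_eq_sum (f g : C →ₗ[k] B) {a : C} {ι : Type*} (r : Coalgebra.Repr k a ι) :
    conv k f g a = ∑ i ∈ r.index, f (r.left i) * g (r.right i) := by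
  rw [conv_apply, ← r.eq]
  simp [map_sum]

lemma conv_one_left (f : C →ₗ[k] B) : conv k (convOne k) f = f := by
  ext a
  obtain r := Coalgebra.Repr.arbitrary k a
  have h1 := congrArg (TensorProduct.lid k C) (Coalgebra.sum_counit_tmul_eq r)
  simp only [map_sum, TensorProduct.lid_tmul, TensorProduct.lid_symm_apply] at h1
  rw [one_smul] at h1
  rw [conv_eq_sum (convOne k) f r]
  calc ∑ i ∈ r.index, convOne k (r.left i) * f (r.right i)
      = ∑ i ∈ r.index, f (Coalgebra.counit (r.left i) • r.right i) := by
        refine Finset.sum_congr rfl fun i _ => ?_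
        rw [_root_.convOne_apply, ← Algebra.smul_def, map_smul]
    _ = f a := by rw [← map_sum]; exact congrArg f h1

lemma conv_one_right (f : C →ₗ[k] B) : conv k f (convOne k) = f := by
  ext a
  obtain r := Coalgebra.Repr.arbitrary k a
  have h1 := congrArg (TensorProduct.rid k C) (Coalgebra.sum_tmul_counit_eq r)
  simp only [map_sum, TensorProduct.rid_tmul] at h1
  rw [one_smul] at h1
  rw [conv_eq_sum f (convOne k) r]
  calc ∑ i ∈ r.index, f (r.left i) * convOne k (r.right i)
      = ∑ i ∈ r.index, f (Coalgebra.counit (r.right i) • r.left i) := by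
        refine Finset.sum_congr rfl fun i _ => ?_
        rw [_root_.convOne_apply, ← Algebra.commutes, ← Algebra.smul_def, map_smul]
    _ = f a := by rw [← map_sum]; exact congrArg f h1

lemma conv_assoc (f g h : C →ₗ[k] B) :
    conv k (conv k f g) h = conv k f (conv k g h) := by
  ext a
  obtain r := Coalgebra.Repr.arbitrary k a
  set a₁ : (i : r.ι) → Coalgebra.Repr k (r.left i) (C × C) :=
    fun i => Coalgebra.Repr.arbitrary k (r.left i) with ha₁
  set a₂ : (i : r.ι) → Coalgebra.Repr k (r.right i) (C × C) :=
    fun i => Coalgebra.Repr.arbitrary k (r.right i) with ha₂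
  have key := Coalgebra.sum_map_tmul_tmul_eq f g h a (repr := r) (a₁ := a₁) (a₂ := a₂)
  have key2 := congrArg (LinearMap.mul' k B ∘ₗ LinearMap.lTensor B (LinearMap.mul' k B)) key
  simp only [map_sum, LinearMap.comp_apply, LinearMap.lTensor_tmul,
    LinearMap.mul'_apply] at key2
  have lhs : conv k (conv k f g) h a
      = ∑ i ∈ r.index, ∑ j ∈ (a₁ i).index,
          f ((a₁ i).left j) * g ((a₁ i).right j) * h (r.right i) := by
    rw [conv_eq_sum (conv k f g) h r]
    refine Finset.sum_congr rfl fun i _ => ?_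
    rw [conv_eq_sum f g (a₁ i), Finset.sum_mul]
  have rhs : conv k f (conv k g h) a
      = ∑ i ∈ r.index, ∑ j ∈ (a₂ i).index,
          f (r.left i) * (g ((a₂ i).left j) * h ((a₂ i).right j)) := by
    rw [conv_eq_sum f (conv k g h) r]
    refine Finset.sum_congr rfl fun i _ => ?_
    rw [conv_eq_sum g h (a₂ i), Finset.mul_sum]
  rw [lhs, rhs]
  simp only [mul_assoc]
  exact key2.symm

lemma conv_inv_unique {f g g' : C →ₗ[k] B} (h1 : conv k f g = convOne k)
    (h2 : conv k g' f = convOne k) : g' = g := by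
  have : conv k g' (conv k f g) = conv k (conv k g' f) g := (conv_assoc g' f g).symm
  rw [h1, h2, conv_one_right, conv_one_left] at this
  exact this

end ConvLemmas

variable (A P : Type*) [Ring A] [HopfAlgebra k A] [Ring P] [Algebra k P]

/-- The canonical map `χ : P ⊗ P → P ⊗ A`, `u ⊗ v ↦ u v⁽¹⁾ ⊗ v⁽²⁾`,
i.e. `χ = (mult ⊗ id) ∘ (id ⊗ Δ_R)`. -/
def chiMap (ΔR : P →ₗ[k] P ⊗[k] A) : P ⊗[k] P →ₗ[k] P ⊗[k] A :=
  TensorProduct.map (LinearMap.mul' k P) LinearMap.id ∘ₗ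
    (TensorProduct.assoc k P P A).symm.toLinearMap ∘ₗ
    TensorProduct.map LinearMap.id ΔR

/-- The right adjoint coaction `Ad(a) = a₂ ⊗ S(a₁)a₃`. -/
def adCoaction : A →ₗ[k] A ⊗[k] A :=
  TensorProduct.map LinearMap.id (LinearMap.mul' k A) ∘ₗ
    (TensorProduct.leftComm k A A A).toLinearMap ∘ₗ
    TensorProduct.map (HopfAlgebra.antipode (R := k)) LinearMap.id ∘ₗ
    TensorProduct.map LinearMap.id Coalgebra.comul ∘ₗ Coalgebra.comul

/-- The kernel of `P ⊗ P → P ⊗_B P`: the span of elements `u b ⊗ v - u ⊗ b v`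
with `b` a coinvariant (`Δ_R b = b ⊗ 1`), so that `P ⊗_B P = (P ⊗ P) ⧸ relSub`. -/
def relSub (ΔR : P →ₗ[k] P ⊗[k] A) : Submodule k (P ⊗[k] P) :=
  Submodule.span k {x | ∃ u v b : P, ΔR b = b ⊗ₜ 1 ∧ x = (u * b) ⊗ₜ v - u ⊗ₜ (b * v)}

/-- The image of `B ⊗ B` in `P ⊗ P`, where `B = Pᴬ` is the coinvariant subalgebra. -/
def BBsub (ΔR : P →ₗ[k] P ⊗[k] A) : Submodule k (P ⊗[k] P) :=
  Submodule.span k {x | ∃ b c : P, ΔR b = b ⊗ₜ 1 ∧ ΔR c = c ⊗ₜ 1 ∧ x = b ⊗ₜ c}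

/-- The submodule `P B² P ⊆ P ⊗ P`, where `B² = ker(mult : B ⊗ B → B)`. -/
def PB2P (ΔR : P →ₗ[k] P ⊗[k] A) : Submodule k (P ⊗[k] P) :=
  Submodule.span k {w | ∃ u v : P, ∃ x ∈ BBsub k A P ΔR ⊓ LinearMap.ker (LinearMap.mul' k P),
    w = TensorProduct.map (LinearMap.mulLeft k u) (LinearMap.mulRight k v) x}

namespace QPB

open Coalgebra LinearMap

variable {k : Type*} [Field k] {A P : Type*} [Ring A] [HopfAlgebra k A] [Ring P] [Algebra k P]
variable (ΔR : P →ₗ[k] P ⊗[k] A)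

/-- `p ↦ p ⊗ 1` as a linear map. -/
noncomputable def jP : P →ₗ[k] P ⊗[k] A := Algebra.TensorProduct.includeLeft.toLinearMap

@[simp] lemma jP_apply (p : P) : jP (k := k) (A := A) p = p ⊗ₜ 1 := rfl

lemma chi_aux (u : P) (t : P ⊗[k] A) :
    (TensorProduct.map (LinearMap.mul' k P) LinearMap.id ∘ₗ
      (TensorProduct.assoc k P P A).symm.toLinearMap) (u ⊗ₜ t)
    = TensorProduct.map (LinearMap.mulLeft k u) LinearMap.id t := by
  induction t with
  | zero => rw [tmul_zero, map_zero, map_zero]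
  | tmul q c => simp
  | add x y hx hy => rw [tmul_add, map_add, hx, hy, map_add]

lemma chi_tmul (u v : P) :
    chiMap k A P ΔR (u ⊗ₜ v)
      = TensorProduct.map (LinearMap.mulLeft k u) LinearMap.id (ΔR v) := by
  rw [chiMap]
  simp only [LinearMap.comp_apply, LinearEquiv.coe_coe, TensorProduct.map_tmul,
    LinearMap.id_apply]
  exact chi_aux u (ΔR v)


lemma chi_one_tmul (u : P) : chiMap k A P ΔR (1 ⊗ₜ u) = ΔR u := by
  rw [chi_tmul, LinearMap.mulLeft_one, TensorProduct.map_id, LinearMap.id_apply]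

lemma rid_counit_mulLeft (u : P) (t : P ⊗[k] A) :
    TensorProduct.rid k P (TensorProduct.map LinearMap.id Coalgebra.counit
      (TensorProduct.map (LinearMap.mulLeft k u) LinearMap.id t))
    = u * TensorProduct.rid k P (TensorProduct.map LinearMap.id Coalgebra.counit t) := by
  induction t with
  | zero => simp
  | tmul q c => simp [mul_smul_comm]
  | add x y hx hy => simp only [map_add, hx, hy, mul_add]

lemma mu_eq (hcounit : ∀ u : P,
      TensorProduct.map LinearMap.id Coalgebra.counit (ΔR u) = u ⊗ₜ (1 : k))
    (x : P ⊗[k] P) :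
    LinearMap.mul' k P x
      = TensorProduct.rid k P
        (TensorProduct.map LinearMap.id Coalgebra.counit (chiMap k A P ΔR x)) := by
  induction x with
  | zero => simp
  | tmul u v =>
      rw [chi_tmul, rid_counit_mulLeft, hcounit v]
      simp
  | add x y hx hy => simp only [map_add, hx, hy]

lemma ker_chi_le_ker_mu (hcounit : ∀ u : P,
      TensorProduct.map LinearMap.id Coalgebra.counit (ΔR u) = u ⊗ₜ (1 : k)) :
    LinearMap.ker (chiMap k A P ΔR) ≤ LinearMap.ker (LinearMap.mul' k P) := by
  intro x hx
  rw [LinearMap.mem_ker] at hx ⊢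
  rw [mu_eq ΔR hcounit, hx]
  simp

lemma ker_chi_eq (hcounit : ∀ u : P,
      TensorProduct.map LinearMap.id Coalgebra.counit (ΔR u) = u ⊗ₜ (1 : k))
    (hexact : LinearMap.ker (chiMap k A P ΔR) ⊓ LinearMap.ker (LinearMap.mul' k P)
      = PB2P k A P ΔR) :
    LinearMap.ker (chiMap k A P ΔR) = PB2P k A P ΔR := by
  rw [← hexact]
  exact le_antisymm (fun x hx => ⟨hx, ker_chi_le_ker_mu ΔR hcounit hx⟩) inf_le_left

lemma factor_through_chi (hcounit : ∀ u : P,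
      TensorProduct.map LinearMap.id Coalgebra.counit (ΔR u) = u ⊗ₜ (1 : k))
    (hexact : LinearMap.ker (chiMap k A P ΔR) ⊓ LinearMap.ker (LinearMap.mul' k P)
      = PB2P k A P ΔR)
    {W : Type*} [AddCommGroup W] [Module k W]
    (T : P ⊗[k] P →ₗ[k] W) (hT : PB2P k A P ΔR ≤ LinearMap.ker T)
    {s : P ⊗[k] A →ₗ[k] P ⊗[k] P} (hs : chiMap k A P ΔR ∘ₗ s = LinearMap.id)
    (x : P ⊗[k] P) :
    T x = T (s (chiMap k A P ΔR x)) := by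
  have hker : x - s (chiMap k A P ΔR x) ∈ LinearMap.ker (chiMap k A P ΔR) := by
    rw [LinearMap.mem_ker, map_sub, ← LinearMap.comp_apply, hs, LinearMap.id_apply, sub_self]
  rw [ker_chi_eq ΔR hcounit hexact] at hker
  have := hT hker
  rw [LinearMap.mem_ker, map_sub, sub_eq_zero] at this
  exact this

section Kills

lemma mapF_coinv_mul (F : P →ₗ[k] P)
    (hF : ∀ b : P, ΔR b = b ⊗ₜ 1 → ∀ u : P, F (b * u) = b * F u)
    (c : P) (hc : ΔR c = c ⊗ₜ 1) (t : P ⊗[k] A) :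
    TensorProduct.map F LinearMap.id ((c ⊗ₜ (1 : A)) * t)
      = (c ⊗ₜ (1 : A)) * TensorProduct.map F LinearMap.id t := by
  induction t with
  | zero => simp
  | tmul q d =>
      simp only [Algebra.TensorProduct.tmul_mul_tmul, one_mul, TensorProduct.map_tmul,
        LinearMap.id_coe, id_eq]
      rw [hF c hc q]
  | add x y hx hy => simp only [mul_add, map_add, hx, hy]

/-- `u ⊗ v ↦ u F(v)`. -/
noncomputable def muF (F : P →ₗ[k] P) : P ⊗[k] P →ₗ[k] P :=
  LinearMap.mul' k P ∘ₗ TensorProduct.map LinearMap.id F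

@[simp] lemma muF_tmul (F : P →ₗ[k] P) (u v : P) : muF F (u ⊗ₜ v) = u * F v := rfl

/-- `u ⊗ v ↦ Δ_R(u) (F ⊗ id)(Δ_R v)`. -/
noncomputable def Hmap (F : P →ₗ[k] P) : P ⊗[k] P →ₗ[k] P ⊗[k] A :=
  LinearMap.mul' k (P ⊗[k] A) ∘ₗ
    TensorProduct.map ΔR (TensorProduct.map F LinearMap.id ∘ₗ ΔR)

@[simp] lemma Hmap_tmul (F : P →ₗ[k] P) (u v : P) :
    Hmap ΔR F (u ⊗ₜ v) = ΔR u * TensorProduct.map F LinearMap.id (ΔR v) := rfl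

lemma muF_kills (F : P →ₗ[k] P)
    (hF : ∀ b : P, ΔR b = b ⊗ₜ 1 → ∀ u : P, F (b * u) = b * F u) :
    PB2P k A P ΔR ≤ LinearMap.ker (muF (k := k) F) := by
  rw [PB2P, Submodule.span_le]
  rintro w ⟨u, v, x, hx, rfl⟩
  rw [Submodule.mem_inf] at hx
  obtain ⟨hxBB, hxmu⟩ := hx
  have hgen : BBsub k A P ΔR ≤ LinearMap.ker
      ((muF (k := k) F ∘ₗ TensorProduct.map (LinearMap.mulLeft k u) (LinearMap.mulRight k v))
        - (LinearMap.mulRight k (F v) ∘ₗ LinearMap.mulLeft k u ∘ₗ LinearMap.mul' k P)) := by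
    rw [BBsub, Submodule.span_le]
    rintro y ⟨b, c, hb, hc, rfl⟩
    simp only [SetLike.mem_coe, LinearMap.mem_ker, LinearMap.sub_apply, LinearMap.comp_apply,
      TensorProduct.map_tmul, LinearMap.mulLeft_apply, LinearMap.mulRight_apply,
      LinearMap.mul'_apply, muF_tmul, sub_eq_zero]
    rw [hF c hc v]
    simp only [mul_assoc]
  have h2 := hgen hxBB
  simp only [SetLike.mem_coe, LinearMap.mem_ker, LinearMap.sub_apply, LinearMap.comp_apply,
    sub_eq_zero] at h2
  rw [SetLike.mem_coe, LinearMap.mem_ker, h2]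
  rw [LinearMap.mem_ker] at hxmu
  rw [hxmu]
  simp

lemma Hmap_kills (F : P →ₗ[k] P)
    (hmul : ∀ u v : P, ΔR (u * v) = ΔR u * ΔR v)
    (hF : ∀ b : P, ΔR b = b ⊗ₜ 1 → ∀ u : P, F (b * u) = b * F u) :
    PB2P k A P ΔR ≤ LinearMap.ker (Hmap ΔR F) := by
  rw [PB2P, Submodule.span_le]
  rintro w ⟨u, v, x, hx, rfl⟩
  rw [Submodule.mem_inf] at hx
  obtain ⟨hxBB, hxmu⟩ := hx
  have hgen : BBsub k A P ΔR ≤ LinearMap.ker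
      ((Hmap ΔR F ∘ₗ TensorProduct.map (LinearMap.mulLeft k u) (LinearMap.mulRight k v))
        - (LinearMap.mulRight k (TensorProduct.map F LinearMap.id (ΔR v)) ∘ₗ
            LinearMap.mulLeft k (ΔR u) ∘ₗ jP ∘ₗ LinearMap.mul' k P)) := by
    rw [BBsub, Submodule.span_le]
    rintro y ⟨b, c, hb, hc, rfl⟩
    simp only [SetLike.mem_coe, LinearMap.mem_ker, LinearMap.sub_apply, LinearMap.comp_apply,
      TensorProduct.map_tmul, LinearMap.mulLeft_apply, LinearMap.mulRight_apply,
      LinearMap.mul'_apply, Hmap_tmul, jP_apply, sub_eq_zero]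
    rw [hmul u b, hb, hmul c v, hc, mapF_coinv_mul ΔR F hF c hc]
    simp only [← mul_assoc]
    rw [show (ΔR u * (b : P) ⊗ₜ (1:A)) * ((c : P) ⊗ₜ (1:A)) = ΔR u * ((b * c : P) ⊗ₜ (1:A)) from by
      rw [mul_assoc, Algebra.TensorProduct.tmul_mul_tmul, mul_one]]
  have h2 := hgen hxBB
  simp only [SetLike.mem_coe, LinearMap.mem_ker, LinearMap.sub_apply, LinearMap.comp_apply,
    sub_eq_zero] at h2
  rw [SetLike.mem_coe, LinearMap.mem_ker, h2]
  rw [LinearMap.mem_ker] at hxmu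
  rw [hxmu]
  simp

end Kills

section HopfUnits

/-- `a ↦ 1 ⊗ a`. -/
noncomputable def iota : A →ₗ[k] P ⊗[k] A := TensorProduct.mk k P A 1

@[simp] lemma iota_apply (a : A) : iota (k := k) (P := P) a = 1 ⊗ₜ a := rfl

/-- `a ↦ 1 ⊗ S(a)`. -/
noncomputable def iotaS : A →ₗ[k] P ⊗[k] A :=
  TensorProduct.mk k P A 1 ∘ₗ HopfAlgebra.antipode (R := k)

@[simp] lemma iotaS_apply (a : A) :
    iotaS (k := k) (P := P) a = 1 ⊗ₜ HopfAlgebra.antipode (R := k) a := rfl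

/-- `a ↦ φ(a) ⊗ 1`. -/
noncomputable def hatP (φ : A →ₗ[k] P) : A →ₗ[k] P ⊗[k] A := jP ∘ₗ φ

@[simp] lemma hatP_apply (φ : A →ₗ[k] P) (a : A) : hatP φ a = φ a ⊗ₜ 1 := rfl

lemma convOne_PA (a : A) :
    convOne k (C := A) (B := P ⊗[k] A) a
      = Coalgebra.counit (R := k) a • ((1 : P) ⊗ₜ (1 : A)) := by
  rw [_root_.convOne_apply, Algebra.TensorProduct.algebraMap_apply, Algebra.algebraMap_eq_smul_one,
    smul_tmul']

lemma conv_iota_iotaS : conv k ((iota : A →ₗ[k] P ⊗[k] A)) ((iotaS : A →ₗ[k] P ⊗[k] A)) = convOne k := by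
  ext a
  obtain r := Coalgebra.Repr.arbitrary k a
  rw [conv_eq_sum ((iota : A →ₗ[k] P ⊗[k] A)) ((iotaS : A →ₗ[k] P ⊗[k] A)) r, convOne_PA]
  have key := HopfAlgebra.sum_mul_antipode_eq_algebraMap_counit (R := k) (a := a) r
  calc ∑ i ∈ r.index, iota (r.left i) * iotaS (r.right i)
      = (1 : P) ⊗ₜ (∑ i ∈ r.index, r.left i * HopfAlgebra.antipode (R := k) (r.right i)) := by
        rw [tmul_sum]
        refine Finset.sum_congr rfl fun i _ => ?_
        simp [Algebra.TensorProduct.tmul_mul_tmul]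
    _ = Coalgebra.counit (R := k) a • ((1 : P) ⊗ₜ (1 : A)) := by
        rw [key, Algebra.algebraMap_eq_smul_one, tmul_smul]

lemma conv_iotaS_iota : conv k ((iotaS : A →ₗ[k] P ⊗[k] A)) ((iota : A →ₗ[k] P ⊗[k] A)) = convOne k := by
  ext a
  obtain r := Coalgebra.Repr.arbitrary k a
  rw [conv_eq_sum ((iotaS : A →ₗ[k] P ⊗[k] A)) ((iota : A →ₗ[k] P ⊗[k] A)) r, convOne_PA]
  have key := HopfAlgebra.sum_antipode_mul_eq_algebraMap_counit (R := k) (a := a) r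
  calc ∑ i ∈ r.index, iotaS (r.left i) * iota (r.right i)
      = (1 : P) ⊗ₜ (∑ i ∈ r.index, HopfAlgebra.antipode (R := k) (r.left i) * r.right i) := by
        rw [tmul_sum]
        refine Finset.sum_congr rfl fun i _ => ?_
        simp [Algebra.TensorProduct.tmul_mul_tmul]
    _ = Coalgebra.counit (R := k) a • ((1 : P) ⊗ₜ (1 : A)) := by
        rw [key, Algebra.algebraMap_eq_smul_one, tmul_smul]

lemma hat_conv (φ ψ : A →ₗ[k] P) :
    conv k (hatP φ) (hatP ψ) = hatP (conv k φ ψ) := by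
  ext a
  obtain r := Coalgebra.Repr.arbitrary k a
  rw [conv_eq_sum (hatP φ) (hatP ψ) r]
  rw [hatP_apply, conv_eq_sum φ ψ r, sum_tmul]
  refine Finset.sum_congr rfl fun i _ => ?_
  simp [Algebra.TensorProduct.tmul_mul_tmul]

lemma hat_convOne : hatP (convOne k (C := A) (B := P)) = convOne k (C := A) (B := P ⊗[k] A) := by
  ext a
  rw [hatP_apply, convOne_PA, _root_.convOne_apply, Algebra.algebraMap_eq_smul_one, smul_tmul']

lemma ad_eq_sum {a : A} (r : Coalgebra.Repr k a (A × A))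
    (r2 : (i : r.ι) → Coalgebra.Repr k (r.right i) (A × A)) :
    adCoaction k A a = ∑ i ∈ r.index, ∑ j ∈ (r2 i).index,
      (r2 i).left j ⊗ₜ (HopfAlgebra.antipode (R := k) (r.left i) * (r2 i).right j) := by
  rw [adCoaction]
  simp only [LinearMap.comp_apply]
  rw [← r.eq]
  rw [map_sum, map_sum, map_sum, map_sum]
  refine Finset.sum_congr rfl fun i _ => ?_
  rw [TensorProduct.map_tmul, LinearMap.id_apply, ← (r2 i).eq, tmul_sum, map_sum, map_sum,
    map_sum]
  refine Finset.sum_congr rfl fun j _ => ?_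
  simp

lemma keyAD (φ : A →ₗ[k] P) :
    TensorProduct.map φ LinearMap.id ∘ₗ adCoaction k A
      = conv k (conv k ((iotaS : A →ₗ[k] P ⊗[k] A)) (hatP φ)) ((iota : A →ₗ[k] P ⊗[k] A)) := by
  ext a
  obtain r := Coalgebra.Repr.arbitrary k a
  set r1 : (i : r.ι) → Coalgebra.Repr k (r.left i) (A × A) :=
    fun i => Coalgebra.Repr.arbitrary k (r.left i) with hr1
  set r2 : (i : r.ι) → Coalgebra.Repr k (r.right i) (A × A) :=
    fun i => Coalgebra.Repr.arbitrary k (r.right i) with hr2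
  have key := Coalgebra.sum_tmul_tmul_eq r r1 r2
  set T : A ⊗[k] (A ⊗[k] A) →ₗ[k] P ⊗[k] A :=
    TensorProduct.map φ (LinearMap.mul' k A) ∘ₗ (TensorProduct.leftComm k A A A).toLinearMap ∘ₗ
      TensorProduct.map (HopfAlgebra.antipode (R := k)) LinearMap.id with hT
  have hTtmul : ∀ (x y z : A), T (x ⊗ₜ (y ⊗ₜ z))
      = φ y ⊗ₜ (HopfAlgebra.antipode (R := k) x * z) := by
    intro x y z
    simp [hT, TensorProduct.leftComm_tmul]
  have key2 := congrArg T key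
  simp only [map_sum, hTtmul] at key2
  have lhs : (TensorProduct.map φ LinearMap.id ∘ₗ adCoaction k A) a
      = ∑ i ∈ r.index, ∑ j ∈ (r2 i).index,
          φ ((r2 i).left j) ⊗ₜ (HopfAlgebra.antipode (R := k) (r.left i) * (r2 i).right j) := by
    rw [LinearMap.comp_apply, ad_eq_sum r r2, map_sum]
    refine Finset.sum_congr rfl fun i _ => ?_
    rw [map_sum]
    refine Finset.sum_congr rfl fun j _ => ?_
    simp
  have rhs : conv k (conv k ((iotaS : A →ₗ[k] P ⊗[k] A)) (hatP φ)) ((iota : A →ₗ[k] P ⊗[k] A)) a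
      = ∑ i ∈ r.index, ∑ j ∈ (r1 i).index,
          φ ((r1 i).right j) ⊗ₜ (HopfAlgebra.antipode (R := k) ((r1 i).left j) * r.right i) := by
    rw [conv_eq_sum (conv k ((iotaS : A →ₗ[k] P ⊗[k] A)) (hatP φ)) ((iota : A →ₗ[k] P ⊗[k] A)) r]
    refine Finset.sum_congr rfl fun i _ => ?_
    rw [conv_eq_sum ((iotaS : A →ₗ[k] P ⊗[k] A)) (hatP φ) (r1 i), Finset.sum_mul]
    refine Finset.sum_congr rfl fun j _ => ?_
    simp [Algebra.TensorProduct.tmul_mul_tmul]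
  rw [lhs, rhs, ← key2]

end HopfUnits

section Push

lemma conv_push (hmul : ∀ u v : P, ΔR (u * v) = ΔR u * ΔR v) (φ ψ : A →ₗ[k] P) :
    conv k (ΔR ∘ₗ φ) (ΔR ∘ₗ ψ) = ΔR ∘ₗ conv k φ ψ := by
  ext a
  obtain r := Coalgebra.Repr.arbitrary k a
  rw [LinearMap.comp_apply, conv_eq_sum (ΔR ∘ₗ φ) (ΔR ∘ₗ ψ) r, conv_eq_sum φ ψ r, map_sum]
  refine Finset.sum_congr rfl fun i _ => ?_
  rw [LinearMap.comp_apply, LinearMap.comp_apply, ← hmul]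

lemma convOne_push (hone : ΔR 1 = 1) :
    ΔR ∘ₗ convOne k (C := A) (B := P) = convOne k (C := A) (B := P ⊗[k] A) := by
  ext a
  rw [LinearMap.comp_apply, _root_.convOne_apply, _root_.convOne_apply, Algebra.algebraMap_eq_smul_one,
    Algebra.algebraMap_eq_smul_one, map_smul, hone]

/-- helper : `(p ⋆ ι) ⋆ (ιS ⋆ q) = p ⋆ q`. -/
lemma conv_iota_cancel (p q : A →ₗ[k] P ⊗[k] A) :
    conv k (conv k p (iota : A →ₗ[k] P ⊗[k] A)) (conv k (iotaS : A →ₗ[k] P ⊗[k] A) q)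
      = conv k p q := by
  rw [conv_assoc, ← conv_assoc (iota : A →ₗ[k] P ⊗[k] A), conv_iota_iotaS, conv_one_left]

/-- Covariance passes to convolution inverses. -/
lemma cov_inv (hmul : ∀ u v : P, ΔR (u * v) = ΔR u * ΔR v) (hone : ΔR 1 = 1)
    (f g : A →ₗ[k] P)
    (hfg : conv k f g = convOne k) (hgf : conv k g f = convOne k)
    (hcov : ΔR ∘ₗ f = TensorProduct.map f LinearMap.id ∘ₗ adCoaction k A) :
    ΔR ∘ₗ g = TensorProduct.map g LinearMap.id ∘ₗ adCoaction k A := by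
  have hαγ : conv k (ΔR ∘ₗ f) (TensorProduct.map g LinearMap.id ∘ₗ adCoaction k A)
      = convOne k := by
    rw [hcov, keyAD f, keyAD g]
    rw [conv_assoc (conv k (iotaS : A →ₗ[k] P ⊗[k] A) (hatP f)) (iota : A →ₗ[k] P ⊗[k] A)
      (conv k (conv k (iotaS : A →ₗ[k] P ⊗[k] A) (hatP g)) (iota : A →ₗ[k] P ⊗[k] A))]
    rw [conv_assoc (iotaS : A →ₗ[k] P ⊗[k] A) (hatP g) (iota : A →ₗ[k] P ⊗[k] A)]
    rw [← conv_assoc (iota : A →ₗ[k] P ⊗[k] A) (iotaS : A →ₗ[k] P ⊗[k] A)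
      (conv k (hatP g) (iota : A →ₗ[k] P ⊗[k] A))]
    rw [conv_iota_iotaS, conv_one_left]
    rw [← conv_assoc (conv k (iotaS : A →ₗ[k] P ⊗[k] A) (hatP f)) (hatP g)
      (iota : A →ₗ[k] P ⊗[k] A)]
    rw [conv_assoc (iotaS : A →ₗ[k] P ⊗[k] A) (hatP f) (hatP g), hat_conv, hfg, hat_convOne,
      conv_one_right, conv_iotaS_iota]
  have hβα : conv k (ΔR ∘ₗ g) (ΔR ∘ₗ f) = convOne k := by
    rw [conv_push ΔR hmul, hgf, convOne_push ΔR hone]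
  exact conv_inv_unique hαγ hβα

end Push

section PhiPsi

/-- `u ⊗ b ↦ u f(b)`. -/
noncomputable def hAf (f : A →ₗ[k] P) : P ⊗[k] A →ₗ[k] P :=
  LinearMap.mul' k P ∘ₗ TensorProduct.map LinearMap.id f

@[simp] lemma hAf_tmul (f : A →ₗ[k] P) (u : P) (b : A) : hAf f (u ⊗ₜ b) = u * f b := rfl

/-- The map `f ↦ id ⋆ f`, `u ↦ u⁰ f(u¹)`. -/
noncomputable def Phi (f : A →ₗ[k] P) : P →ₗ[k] P := hAf f ∘ₗ ΔR

lemma Phi_apply (f : A →ₗ[k] P) (u : P) : Phi ΔR f u = hAf f (ΔR u) := rfl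

/-- The map `F ↦ ·∘(id ⊗ F)∘σ`. -/
noncomputable def Psi (σ : A →ₗ[k] P ⊗[k] P) (F : P →ₗ[k] P) : A →ₗ[k] P :=
  muF F ∘ₗ σ

lemma Psi_apply (σ : A →ₗ[k] P ⊗[k] P) (F : P →ₗ[k] P) (a : A) :
    Psi σ F a = muF F (σ a) := rfl

lemma Phi_one (hone : ΔR 1 = 1) (f : A →ₗ[k] P) (hf1 : f 1 = 1) : Phi ΔR f 1 = 1 := by
  rw [Phi_apply, hone, Algebra.TensorProduct.one_def, hAf_tmul, hf1, one_mul]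

lemma hAf_mulLeft_tmulone (f : A →ₗ[k] P) (b : P) (t : P ⊗[k] A) :
    hAf f ((b ⊗ₜ (1 : A)) * t) = b * hAf f t := by
  induction t with
  | zero => simp
  | tmul q c => simp [Algebra.TensorProduct.tmul_mul_tmul, mul_assoc]
  | add x y hx hy => simp only [mul_add, map_add, hx, hy]

lemma Phi_Blinear (hmul : ∀ u v : P, ΔR (u * v) = ΔR u * ΔR v) (f : A →ₗ[k] P)
    (b : P) (hb : ΔR b = b ⊗ₜ 1) (u : P) : Phi ΔR f (b * u) = b * Phi ΔR f u := by
  rw [Phi_apply, hmul, hb, hAf_mulLeft_tmulone, Phi_apply]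

lemma muF_mulLeft (F : P →ₗ[k] P) (p : P) (x : P ⊗[k] P) :
    muF F (TensorProduct.map (LinearMap.mulLeft k p) LinearMap.id x) = p * muF F x := by
  induction x with
  | zero => simp
  | tmul u v => simp [mul_assoc]
  | add x y hx hy => simp only [map_add, hx, hy, mul_add]

lemma chi_mulLeft_comm (p : P) (x : P ⊗[k] P) :
    chiMap k A P ΔR (TensorProduct.map (LinearMap.mulLeft k p) LinearMap.id x)
      = TensorProduct.map (LinearMap.mulLeft k p) LinearMap.id (chiMap k A P ΔR x) := by
  induction x with
  | zero => simp
  | tmul u v =>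
      rw [TensorProduct.map_tmul, LinearMap.mulLeft_apply, LinearMap.id_apply, chi_tmul,
        chi_tmul]
      induction ΔR v with
      | zero => simp
      | tmul q c => simp [mul_assoc]
      | add x y hx hy => simp only [map_add, hx, hy]
  | add x y hx hy => simp only [map_add, hx, hy]

/-- `Ψ ∘ Φ = id` : `Ψ(Φ f) = f` for every `f`. -/
lemma PsiPhi (σ : A →ₗ[k] P ⊗[k] P)
    (hσ : ∀ a : A, chiMap k A P ΔR (σ a) = (1 : P) ⊗ₜ a) (f : A →ₗ[k] P) :
    Psi σ (Phi ΔR f) = f := by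
  have key : ∀ x : P ⊗[k] P, muF (Phi ΔR f) x = hAf f (chiMap k A P ΔR x) := by
    intro x
    induction x with
    | zero => simp
    | tmul u v =>
        rw [muF_tmul, chi_tmul, Phi_apply]
        induction ΔR v with
        | zero => simp
        | tmul q c => simp [mul_assoc]
        | add x y hx hy => simp only [map_add, hx, hy, mul_add]
    | add x y hx hy => simp only [map_add, hx, hy]
  ext a
  rw [Psi_apply, key, hσ, hAf_tmul, one_mul]

end PhiPsi

section PhiPsi2

variable (hcounit : ∀ u : P,
    TensorProduct.map LinearMap.id Coalgebra.counit (ΔR u) = u ⊗ₜ (1 : k))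
  (hexact : LinearMap.ker (chiMap k A P ΔR) ⊓ LinearMap.ker (LinearMap.mul' k P)
      = PB2P k A P ΔR)
  {s : P ⊗[k] A →ₗ[k] P ⊗[k] P} (hs : chiMap k A P ΔR ∘ₗ s = LinearMap.id)
  (σ : A →ₗ[k] P ⊗[k] P)
  (hσ : ∀ a : A, chiMap k A P ΔR (σ a) = (1 : P) ⊗ₜ a)

include hcounit hexact hs hσ

lemma PhiPsi (F : P →ₗ[k] P)
    (hF : ∀ b : P, ΔR b = b ⊗ₜ 1 → ∀ u : P, F (b * u) = b * F u) (u : P) :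
    Phi ΔR (Psi σ F) u = F u := by
  have hfac : ∀ x : P ⊗[k] P, muF (k := k) F x = muF F (s (chiMap k A P ΔR x)) :=
    factor_through_chi ΔR hcounit hexact (muF F) (muF_kills ΔR F hF) hs
  obtain ⟨sf, hsf⟩ := TensorProduct.exists_finset (R := k) (ΔR u)
  have lhs : Phi ΔR (Psi σ F) u
      = muF F (∑ i ∈ sf, TensorProduct.map (LinearMap.mulLeft k i.1) LinearMap.id (σ i.2)) := by
    rw [Phi_apply, hsf, map_sum, map_sum]
    refine Finset.sum_congr rfl fun i _ => ?_
    rw [hAf_tmul, Psi_apply, muF_mulLeft]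
  have hchiY : chiMap k A P ΔR
      (∑ i ∈ sf, TensorProduct.map (LinearMap.mulLeft k i.1) LinearMap.id (σ i.2)) = ΔR u := by
    rw [map_sum, hsf]
    refine Finset.sum_congr rfl fun i _ => ?_
    rw [chi_mulLeft_comm, hσ, TensorProduct.map_tmul, LinearMap.mulLeft_apply,
      LinearMap.id_apply, mul_one]
  have rhs : F u = muF F ((1 : P) ⊗ₜ u) := by rw [muF_tmul, one_mul]
  rw [lhs, rhs, hfac ((1 : P) ⊗ₜ u), hfac
    (∑ i ∈ sf, TensorProduct.map (LinearMap.mulLeft k i.1) LinearMap.id (σ i.2)),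
    hchiY, chi_one_tmul]

lemma Psi_one (hone : ΔR 1 = 1) (F : P →ₗ[k] P)
    (hF : ∀ b : P, ΔR b = b ⊗ₜ 1 → ∀ u : P, F (b * u) = b * F u) (hF1 : F 1 = 1) :
    Psi σ F 1 = 1 := by
  have hfac : ∀ x : P ⊗[k] P, muF (k := k) F x = muF F (s (chiMap k A P ΔR x)) :=
    factor_through_chi ΔR hcounit hexact (muF F) (muF_kills ΔR F hF) hs
  have h1 : chiMap k A P ΔR ((1 : P) ⊗ₜ (1 : P)) = (1 : P) ⊗ₜ (1 : A) := by
    rw [chi_one_tmul, hone, Algebra.TensorProduct.one_def]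
  rw [Psi_apply, hfac (σ 1), hσ 1, ← h1, ← hfac ((1 : P) ⊗ₜ (1 : P)), muF_tmul, hF1, one_mul]

end PhiPsi2

section Interleave

/-- `E_ρ : u ⊗ b ↦ Δ_R(u)·ρ(b)`. -/
noncomputable def Emap (ρ : A →ₗ[k] P ⊗[k] A) : P ⊗[k] A →ₗ[k] P ⊗[k] A :=
  LinearMap.mul' k (P ⊗[k] A) ∘ₗ TensorProduct.map ΔR ρ

@[simp] lemma Emap_tmul (ρ : A →ₗ[k] P ⊗[k] A) (p : P) (b : A) :
    Emap ΔR ρ (p ⊗ₜ b) = ΔR p * ρ b := rfl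

/-- `D_ρ : u ⊗ b ↦ (u ⊗ 1)·(ι ⋆ ρ)(b)`. -/
noncomputable def Dmap (ρ : A →ₗ[k] P ⊗[k] A) : P ⊗[k] A →ₗ[k] P ⊗[k] A :=
  LinearMap.mul' k (P ⊗[k] A) ∘ₗ
    TensorProduct.map jP (conv k (iota : A →ₗ[k] P ⊗[k] A) ρ)

@[simp] lemma Dmap_tmul (ρ : A →ₗ[k] P ⊗[k] A) (p : P) (b : A) :
    Dmap ρ (p ⊗ₜ b) = (p ⊗ₜ (1 : A)) * conv k (iota : A →ₗ[k] P ⊗[k] A) ρ b := rfl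

lemma Emap_aux (ρ : A →ₗ[k] P ⊗[k] A) (p : P) (t : A ⊗[k] A) :
    LinearMap.mul' k (P ⊗[k] A) (TensorProduct.map LinearMap.id ρ
      ((TensorProduct.assoc k P A A).symm (p ⊗ₜ t)))
    = (p ⊗ₜ (1 : A)) * LinearMap.mul' k (P ⊗[k] A)
        (TensorProduct.map (iota : A →ₗ[k] P ⊗[k] A) ρ t) := by
  induction t with
  | zero => simp
  | tmul x y =>
      simp only [TensorProduct.assoc_symm_tmul, TensorProduct.map_tmul, LinearMap.id_apply,
        LinearMap.mul'_apply, iota_apply]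
      rw [← mul_assoc, Algebra.TensorProduct.tmul_mul_tmul, mul_one, one_mul]
  | add x y hx hy =>
      simp only [tmul_add, map_add, hx, hy, mul_add]

lemma Emap_eq_Dmap_onΔR
    (hcoassoc : ∀ u : P, TensorProduct.map ΔR LinearMap.id (ΔR u)
      = (TensorProduct.assoc k P A A).symm
          (TensorProduct.map LinearMap.id Coalgebra.comul (ΔR u)))
    (ρ : A →ₗ[k] P ⊗[k] A) (u : P) :
    Emap ΔR ρ (ΔR u) = Dmap ρ (ΔR u) := by
  have e1 : ∀ x : P ⊗[k] A, Emap ΔR ρ x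
      = LinearMap.mul' k (P ⊗[k] A) (TensorProduct.map LinearMap.id ρ
          (TensorProduct.map ΔR LinearMap.id x)) := by
    intro x
    induction x with
    | zero => simp
    | tmul p b => simp
    | add x y hx hy => simp only [map_add, hx, hy]
  have e2 : ∀ x : P ⊗[k] A, Dmap ρ x
      = LinearMap.mul' k (P ⊗[k] A) (TensorProduct.map LinearMap.id ρ
          ((TensorProduct.assoc k P A A).symm
            (TensorProduct.map LinearMap.id Coalgebra.comul x))) := by
    intro x
    induction x with
    | zero => simp
    | tmul p b =>
        rw [TensorProduct.map_tmul, LinearMap.id_apply, Emap_aux, Dmap_tmul]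
        rfl
    | add x y hx hy => simp only [map_add, hx, hy]
  rw [e1, e2, hcoassoc u]

end Interleave

section INT

lemma conv_iota_absorb (x : A →ₗ[k] P ⊗[k] A) :
    conv k (iota : A →ₗ[k] P ⊗[k] A)
      (conv k (conv k (iotaS : A →ₗ[k] P ⊗[k] A) x) (iota : A →ₗ[k] P ⊗[k] A))
    = conv k x (iota : A →ₗ[k] P ⊗[k] A) := by
  rw [← conv_assoc (iota : A →ₗ[k] P ⊗[k] A) (conv k (iotaS : A →ₗ[k] P ⊗[k] A) x)
    (iota : A →ₗ[k] P ⊗[k] A)]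
  rw [← conv_assoc (iota : A →ₗ[k] P ⊗[k] A) (iotaS : A →ₗ[k] P ⊗[k] A) x]
  rw [conv_iota_iotaS, conv_one_left]

lemma map_Phi_eq (f : A →ₗ[k] P) (x : P ⊗[k] A) :
    TensorProduct.map (Phi ΔR f) LinearMap.id x
      = TensorProduct.map (hAf f) LinearMap.id (TensorProduct.map ΔR LinearMap.id x) := by
  induction x with
  | zero => simp
  | tmul p b => simp [Phi_apply]
  | add x y hx hy => simp only [map_add, hx, hy]

lemma hAf_assoc_aux (f : A →ₗ[k] P) (p : P) (s : A ⊗[k] A) :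
    TensorProduct.map (hAf f) LinearMap.id ((TensorProduct.assoc k P A A).symm (p ⊗ₜ s))
      = (p ⊗ₜ (1 : A)) * LinearMap.mul' k (P ⊗[k] A)
          (TensorProduct.map (hatP f) (iota : A →ₗ[k] P ⊗[k] A) s) := by
  induction s with
  | zero => simp
  | tmul x y =>
      simp [Algebra.TensorProduct.tmul_mul_tmul]
  | add x y hx hy => simp only [tmul_add, map_add, hx, hy, mul_add]

lemma map_Phi_ΔR_eq
    (hcoassoc : ∀ u : P, TensorProduct.map ΔR LinearMap.id (ΔR u)
      = (TensorProduct.assoc k P A A).symm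
          (TensorProduct.map LinearMap.id Coalgebra.comul (ΔR u)))
    (f : A →ₗ[k] P) (u : P) :
    TensorProduct.map (Phi ΔR f) LinearMap.id (ΔR u)
      = LinearMap.mul' k (P ⊗[k] A) (TensorProduct.map jP
          (conv k (hatP f) (iota : A →ₗ[k] P ⊗[k] A)) (ΔR u)) := by
  rw [map_Phi_eq, hcoassoc u]
  generalize (ΔR u) = t
  induction t with
  | zero => simp
  | tmul p b =>
      rw [TensorProduct.map_tmul, LinearMap.id_apply, hAf_assoc_aux,
        TensorProduct.map_tmul, jP_apply, LinearMap.mul'_apply]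
      rfl
  | add x y hx hy => simp only [map_add, hx, hy]

lemma Phi_intertwines
    (hcoassoc : ∀ u : P, TensorProduct.map ΔR LinearMap.id (ΔR u)
      = (TensorProduct.assoc k P A A).symm
          (TensorProduct.map LinearMap.id Coalgebra.comul (ΔR u)))
    (hmul : ∀ u v : P, ΔR (u * v) = ΔR u * ΔR v)
    (f : A →ₗ[k] P)
    (hcov : ΔR ∘ₗ f = TensorProduct.map f LinearMap.id ∘ₗ adCoaction k A) (u : P) :
    ΔR (Phi ΔR f u) = TensorProduct.map (Phi ΔR f) LinearMap.id (ΔR u) := by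
  have step1 : ∀ t : P ⊗[k] A, ΔR (hAf f t) = Emap ΔR (ΔR ∘ₗ f) t := by
    intro t
    induction t with
    | zero => simp
    | tmul p b => simp [hmul]
    | add x y hx hy => simp only [map_add, hx, hy]
  rw [Phi_apply, step1, hcov, keyAD f, Emap_eq_Dmap_onΔR ΔR hcoassoc, Dmap,
    conv_iota_absorb, map_Phi_ΔR_eq ΔR hcoassoc]
  rfl

lemma Phi_comp
    (hcoassoc : ∀ u : P, TensorProduct.map ΔR LinearMap.id (ΔR u)
      = (TensorProduct.assoc k P A A).symm
          (TensorProduct.map LinearMap.id Coalgebra.comul (ΔR u)))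
    (φ ψ : A →ₗ[k] P)
    (hψ : ∀ u, ΔR (Phi ΔR ψ u) = TensorProduct.map (Phi ΔR ψ) LinearMap.id (ΔR u)) (u : P) :
    Phi ΔR φ (Phi ΔR ψ u) = Phi ΔR (conv k ψ φ) u := by
  have aux1 : ∀ t : P ⊗[k] A, hAf φ (TensorProduct.map (Phi ΔR ψ) LinearMap.id t)
      = LinearMap.mul' k P (TensorProduct.map (hAf ψ) φ
          (TensorProduct.map ΔR LinearMap.id t)) := by
    intro t
    induction t with
    | zero => simp
    | tmul p b => simp [Phi_apply]
    | add x y hx hy => simp only [map_add, hx, hy]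
  have aux2 : ∀ (p : P) (s : A ⊗[k] A),
      LinearMap.mul' k P (TensorProduct.map (hAf ψ) φ
        ((TensorProduct.assoc k P A A).symm (p ⊗ₜ s)))
      = p * LinearMap.mul' k P (TensorProduct.map ψ φ s) := by
    intro p s
    induction s with
    | zero => simp
    | tmul x y =>
        simp only [TensorProduct.assoc_symm_tmul, TensorProduct.map_tmul, hAf_tmul,
          LinearMap.mul'_apply, mul_assoc]
    | add x y hx hy => simp only [tmul_add, map_add, hx, hy, mul_add]
  have aux3 : ∀ t : P ⊗[k] A,
      LinearMap.mul' k P (TensorProduct.map (hAf ψ) φ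
        ((TensorProduct.assoc k P A A).symm
          (TensorProduct.map LinearMap.id Coalgebra.comul t)))
      = hAf (conv k ψ φ) t := by
    intro t
    induction t with
    | zero => simp
    | tmul p b =>
        rw [TensorProduct.map_tmul, LinearMap.id_apply, aux2, hAf_tmul]
        rfl
    | add x y hx hy => simp only [map_add, hx, hy]
  rw [Phi_apply ΔR (conv k ψ φ), ← aux3, ← hcoassoc, ← aux1, ← hψ u, Phi_apply ΔR φ]

lemma Phi_convOne
    (hcounit : ∀ u : P,
      TensorProduct.map LinearMap.id Coalgebra.counit (ΔR u) = u ⊗ₜ (1 : k))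
    (u : P) : Phi ΔR (convOne k (C := A) (B := P)) u = u := by
  have aux : ∀ t : P ⊗[k] A, hAf (convOne k (C := A) (B := P)) t
      = TensorProduct.rid k P (TensorProduct.map LinearMap.id Coalgebra.counit t) := by
    intro t
    induction t with
    | zero => simp
    | tmul p b =>
        rw [hAf_tmul, _root_.convOne_apply, TensorProduct.map_tmul, LinearMap.id_apply,
          TensorProduct.rid_tmul, ← Algebra.commutes, ← Algebra.smul_def]
    | add x y hx hy => simp only [map_add, hx, hy]
  rw [Phi_apply, aux, hcounit u, TensorProduct.rid_tmul, one_smul]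

end INT

section CovB

/-- `θ : a ↦ a₂ ⊗ S(a₁)`. -/
noncomputable def theta : A →ₗ[k] A ⊗[k] A :=
  (TensorProduct.comm k A A).toLinearMap ∘ₗ
    TensorProduct.map (HopfAlgebra.antipode (R := k)) LinearMap.id ∘ₗ Coalgebra.comul

lemma theta_apply (a : A) :
    theta (k := k) (A := A) a
      = TensorProduct.comm k A A (TensorProduct.map (HopfAlgebra.antipode (R := k))
          LinearMap.id (Coalgebra.comul a)) := rfl

/-- `Ω' : p ⊗ x ↦ p⁰ ⊗ x₂ ⊗ p¹ S(x₁)`. -/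
noncomputable def OmegaMap : P ⊗[k] A →ₗ[k] (P ⊗[k] A) ⊗[k] A :=
  LinearMap.lTensor (P ⊗[k] A) (LinearMap.mul' k A) ∘ₗ
    (TensorProduct.tensorTensorTensorComm k P A A A).toLinearMap ∘ₗ
    TensorProduct.map ΔR theta

lemma OmegaMap_tmul (p : P) (x : A) :
    OmegaMap ΔR (p ⊗ₜ x)
      = LinearMap.lTensor (P ⊗[k] A) (LinearMap.mul' k A)
          ((TensorProduct.tensorTensorTensorComm k P A A A) (ΔR p ⊗ₜ theta x)) := rfl

/-- `(p ⊗ b) ⊗ q ↦ (p ⊗ q) ⊗ b`. -/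
noncomputable def permMap : (P ⊗[k] A) ⊗[k] P →ₗ[k] (P ⊗[k] P) ⊗[k] A :=
  (TensorProduct.assoc k P P A).symm.toLinearMap ∘ₗ
    LinearMap.lTensor P (TensorProduct.comm k A P).toLinearMap ∘ₗ
    (TensorProduct.assoc k P A P).toLinearMap

@[simp] lemma permMap_tmul (p : P) (b : A) (q : P) :
    permMap ((p ⊗ₜ b) ⊗ₜ q) = ((p ⊗ₜ q) ⊗ₜ b : (P ⊗[k] P) ⊗[k] A) := by
  simp [permMap]

/-- `(p ⊗ b) ⊗ (q ⊗ c) ↦ (p q ⊗ c) ⊗ b`. -/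
noncomputable def G3Map : (P ⊗[k] A) ⊗[k] (P ⊗[k] A) →ₗ[k] (P ⊗[k] A) ⊗[k] A :=
  (TensorProduct.assoc k P A A).symm.toLinearMap ∘ₗ
    TensorProduct.map (LinearMap.mul' k P) (TensorProduct.comm k A A).toLinearMap ∘ₗ
    (TensorProduct.tensorTensorTensorComm k P A P A).toLinearMap

@[simp] lemma G3Map_tmul (p : P) (b : A) (q : P) (c : A) :
    G3Map ((p ⊗ₜ b) ⊗ₜ (q ⊗ₜ c)) = (((p * q) ⊗ₜ c) ⊗ₜ b : (P ⊗[k] A) ⊗[k] A) := by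
  simp [G3Map]

/-- `W₁ : x ⊗ y ↦ y₂ ⊗ (x S(y₁))` (before collapsing). -/
noncomputable def W1Map : A ⊗[k] A →ₗ[k] A ⊗[k] A :=
  LinearMap.lTensor A (LinearMap.mul' k A) ∘ₗ
    (TensorProduct.leftComm k A A A).toLinearMap ∘ₗ
    LinearMap.lTensor A (theta (k := k) (A := A))

/-- the antipode collapse: `∑ c₃ ⊗ c₁ S(c₂) = c ⊗ 1`. -/
lemma core4 (c : A) : W1Map (k := k) (A := A) (Coalgebra.comul (R := k) c) = c ⊗ₜ (1 : A) := by
  have hθ : LinearMap.lTensor A (theta (k := k) (A := A))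
      = LinearMap.lTensor A ((TensorProduct.comm k A A).toLinearMap ∘ₗ
          TensorProduct.map (HopfAlgebra.antipode (R := k)) LinearMap.id) ∘ₗ
        LinearMap.lTensor A (Coalgebra.comul (R := k)) := by
    rw [← LinearMap.lTensor_comp]; rfl
  have hco : LinearMap.lTensor A (Coalgebra.comul (R := k)) (Coalgebra.comul c)
      = TensorProduct.assoc k A A A
          (LinearMap.rTensor A (Coalgebra.comul (R := k)) (Coalgebra.comul c)) :=
    (Coalgebra.coassoc_apply c).symm
  have aux9 : ∀ e : (A ⊗[k] A) ⊗[k] A,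
      (LinearMap.lTensor A (LinearMap.mul' k A))
        ((TensorProduct.leftComm k A A A).toLinearMap
          ((LinearMap.lTensor A ((TensorProduct.comm k A A).toLinearMap ∘ₗ
              TensorProduct.map (HopfAlgebra.antipode (R := k)) LinearMap.id))
            (TensorProduct.assoc k A A A e)))
      = TensorProduct.comm k A A
          ((LinearMap.rTensor A (LinearMap.mul' k A ∘ₗ
              TensorProduct.map LinearMap.id (HopfAlgebra.antipode (R := k)))) e) := by
    intro e
    induction e with
    | zero => simp
    | tmul s z =>
        induction s with
        | zero => simp
        | tmul x y => simp [TensorProduct.leftComm_tmul]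
        | add x y hx hy => simp only [add_tmul, map_add, hx, hy]
    | add x y hx hy => simp only [map_add, hx, hy]
  rw [W1Map, LinearMap.comp_apply, LinearMap.comp_apply, hθ, LinearMap.comp_apply, hco, aux9]
  rw [← LinearMap.comp_apply, ← LinearMap.rTensor_comp, LinearMap.comp_assoc]
  have hanti : (LinearMap.mul' k A ∘ₗ
      (TensorProduct.map LinearMap.id (HopfAlgebra.antipode (R := k))
        ∘ₗ Coalgebra.comul (R := k) (A := A)))
      = Algebra.linearMap k A ∘ₗ Coalgebra.counit := by
    rw [← LinearMap.comp_assoc]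
    exact HopfAlgebra.mul_antipode_lTensor_comul
  rw [hanti, LinearMap.rTensor_comp, LinearMap.comp_apply, Coalgebra.rTensor_counit_comul]
  simp

lemma Lchi
    (hcoassoc : ∀ u : P, TensorProduct.map ΔR LinearMap.id (ΔR u)
      = (TensorProduct.assoc k P A A).symm
          (TensorProduct.map LinearMap.id Coalgebra.comul (ΔR u)))
    (x : P ⊗[k] P) :
    (LinearMap.rTensor A (chiMap k A P ΔR)) ((TensorProduct.assoc k P P A).symm
      ((TensorProduct.map LinearMap.id ΔR) x))
    = (TensorProduct.assoc k P A A).symm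
        ((TensorProduct.map LinearMap.id Coalgebra.comul) (chiMap k A P ΔR x)) := by
  induction x with
  | zero => simp
  | tmul w v =>
      have step_a : ∀ t : P ⊗[k] A,
          (LinearMap.rTensor A (chiMap k A P ΔR)) ((TensorProduct.assoc k P P A).symm
            (w ⊗ₜ t))
          = (LinearMap.rTensor A (TensorProduct.map (LinearMap.mulLeft k w) LinearMap.id))
              ((TensorProduct.map ΔR LinearMap.id) t) := by
        intro t
        induction t with
        | zero => simp
        | tmul q c =>
            simp only [TensorProduct.assoc_symm_tmul, LinearMap.rTensor_tmul,
              TensorProduct.map_tmul, LinearMap.id_apply]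
            rw [chi_tmul]
        | add x y hx hy => simp only [tmul_add, map_add, hx, hy]
      have step_b : ∀ (q : P) (s : A ⊗[k] A),
          (LinearMap.rTensor A (TensorProduct.map (LinearMap.mulLeft k w) LinearMap.id))
            ((TensorProduct.assoc k P A A).symm (q ⊗ₜ s))
          = (TensorProduct.assoc k P A A).symm ((w * q) ⊗ₜ s) := by
        intro q s
        induction s with
        | zero => simp
        | tmul x y => simp
        | add x y hx hy => simp only [tmul_add, map_add, hx, hy]
      have step_c : ∀ t : P ⊗[k] A,
          (LinearMap.rTensor A (TensorProduct.map (LinearMap.mulLeft k w) LinearMap.id))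
            ((TensorProduct.assoc k P A A).symm
              ((TensorProduct.map LinearMap.id Coalgebra.comul) t))
          = (TensorProduct.assoc k P A A).symm
              ((TensorProduct.map LinearMap.id Coalgebra.comul)
                ((TensorProduct.map (LinearMap.mulLeft k w) LinearMap.id) t)) := by
        intro t
        induction t with
        | zero => simp
        | tmul q c =>
            simp only [TensorProduct.map_tmul, LinearMap.id_apply, LinearMap.mulLeft_apply]
            exact step_b q (Coalgebra.comul c)
        | add x y hx hy => simp only [map_add, hx, hy]
      rw [TensorProduct.map_tmul, LinearMap.id_apply, step_a, hcoassoc v, step_c,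
        chi_tmul]
  | add x y hx hy => simp only [map_add, hx, hy]

lemma Lambda0_eq
    (hcoassoc : ∀ u : P, TensorProduct.map ΔR LinearMap.id (ΔR u)
      = (TensorProduct.assoc k P A A).symm
          (TensorProduct.map LinearMap.id Coalgebra.comul (ΔR u)))
    (hmul : ∀ u v : P, ΔR (u * v) = ΔR u * ΔR v)
    (x : P ⊗[k] P) :
    (LinearMap.rTensor A (chiMap k A P ΔR)) (permMap ((LinearMap.rTensor P ΔR) x))
      = OmegaMap ΔR (chiMap k A P ΔR x) := by
  induction x with
  | zero => simp
  | tmul w v =>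
      -- LHS = G3Map (ΔR w ⊗ₜ ΔR v)
      have aux_g2 : ∀ (p : P) (b : A) (t' : P ⊗[k] A),
          G3Map ((p ⊗ₜ b) ⊗ₜ t')
            = (TensorProduct.map (LinearMap.mulLeft k p) LinearMap.id t') ⊗ₜ b := by
        intro p b t'
        induction t' with
        | zero => simp
        | tmul q c => simp
        | add x y hx hy => simp only [tmul_add, map_add, hx, hy, add_tmul]
      have aux_g : ∀ t : P ⊗[k] A,
          (LinearMap.rTensor A (chiMap k A P ΔR)) (permMap (t ⊗ₜ v))
            = G3Map (t ⊗ₜ ΔR v) := by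
        intro t
        induction t with
        | zero => simp
        | tmul p b =>
            rw [permMap_tmul, LinearMap.rTensor_tmul, chi_tmul, aux_g2]
        | add x y hx hy => simp only [add_tmul, map_add, hx, hy]
      have lhs : (LinearMap.rTensor A (chiMap k A P ΔR)) (permMap
            ((LinearMap.rTensor P ΔR) (w ⊗ₜ v)))
          = G3Map (ΔR w ⊗ₜ ΔR v) := by
        rw [LinearMap.rTensor_tmul]
        exact aux_g (ΔR w)
      -- RHS
      have claim_e : ∀ t : P ⊗[k] A,
          OmegaMap ΔR (TensorProduct.map (LinearMap.mulLeft k w) LinearMap.id t)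
          = (LinearMap.lTensor (P ⊗[k] A) (LinearMap.mul' k A) ∘ₗ
              (TensorProduct.tensorTensorTensorComm k P A A A).toLinearMap ∘ₗ
              LinearMap.rTensor (A ⊗[k] A) (LinearMap.mulLeft k (ΔR w)))
              ((TensorProduct.map ΔR (theta (k := k) (A := A))) t) := by
        intro t
        induction t with
        | zero => simp
        | tmul q c =>
            simp only [TensorProduct.map_tmul, LinearMap.id_apply, LinearMap.mulLeft_apply,
              LinearMap.comp_apply, LinearMap.rTensor_tmul, OmegaMap_tmul, hmul,
              LinearEquiv.coe_coe]
        | add x y hx hy => simp only [map_add, hx, hy]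
      have step_h : (TensorProduct.map ΔR (theta (k := k) (A := A))) (ΔR v)
          = (TensorProduct.map LinearMap.id (theta (k := k) (A := A)))
              ((TensorProduct.assoc k P A A).symm
                ((TensorProduct.map LinearMap.id Coalgebra.comul) (ΔR v))) := by
        have e1 : ∀ t : P ⊗[k] A, (TensorProduct.map ΔR (theta (k := k) (A := A))) t
            = (TensorProduct.map LinearMap.id (theta (k := k) (A := A)))
                ((TensorProduct.map ΔR LinearMap.id) t) := by
          intro t
          induction t with
          | zero => simp
          | tmul q c => simp
          | add x y hx hy => simp only [map_add, hx, hy]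
        rw [e1, hcoassoc v]
      set G5 : (P ⊗[k] A) ⊗[k] (A ⊗[k] A) →ₗ[k] (P ⊗[k] A) ⊗[k] A :=
        LinearMap.lTensor (P ⊗[k] A) (LinearMap.mul' k A) ∘ₗ
          (TensorProduct.tensorTensorTensorComm k P A A A).toLinearMap ∘ₗ
          LinearMap.rTensor (A ⊗[k] A) (LinearMap.mulLeft k (ΔR w)) with hG5
      have claim_f2 : ∀ (q : P) (x : A) (t' : P ⊗[k] A) (r : A ⊗[k] A),
          (LinearMap.lTensor (P ⊗[k] A) (LinearMap.mul' k A))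
            ((TensorProduct.tensorTensorTensorComm k P A A A) ((t' * (q ⊗ₜ x)) ⊗ₜ r))
          = (LinearMap.lTensor (P ⊗[k] A) (LinearMap.mul' k A))
              ((TensorProduct.tensorTensorTensorComm k P A A A)
                ((LinearMap.rTensor (A ⊗[k] A)
                    (TensorProduct.map (LinearMap.mulRight k q) LinearMap.id))
                  (t' ⊗ₜ ((LinearMap.lTensor A (LinearMap.mul' k A))
                    ((TensorProduct.leftComm k A A A) (x ⊗ₜ r)))))) := by
        intro q x t' r
        induction t' with
        | zero => simp
        | tmul p b =>
            induction r with
            | zero => simp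
            | tmul m n =>
                simp [Algebra.TensorProduct.tmul_mul_tmul, TensorProduct.leftComm_tmul,
                  mul_assoc]
            | add y z hy hz =>
                simp only [tmul_add, map_add, hy, hz]
        | add y z hy hz =>
            simp only [add_mul, add_tmul, map_add, hy, hz]
      have claim_f1 : ∀ (q : P) (s : A ⊗[k] A),
          G5 ((TensorProduct.map LinearMap.id (theta (k := k) (A := A)))
            ((TensorProduct.assoc k P A A).symm (q ⊗ₜ s)))
          = (LinearMap.lTensor (P ⊗[k] A) (LinearMap.mul' k A))
              ((TensorProduct.tensorTensorTensorComm k P A A A)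
                ((LinearMap.rTensor (A ⊗[k] A)
                    (TensorProduct.map (LinearMap.mulRight k q) LinearMap.id))
                  (ΔR w ⊗ₜ W1Map s))) := by
        intro q s
        induction s with
        | zero => simp [W1Map]
        | tmul x y =>
            have h1 : W1Map (k := k) (A := A) (x ⊗ₜ y)
                = (LinearMap.lTensor A (LinearMap.mul' k A))
                    ((TensorProduct.leftComm k A A A) (x ⊗ₜ theta y)) := by
              simp [W1Map]
            rw [h1, TensorProduct.assoc_symm_tmul, hG5]
            simp only [LinearMap.comp_apply, TensorProduct.map_tmul, LinearMap.id_apply,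
              LinearMap.rTensor_tmul, LinearMap.mulLeft_apply, LinearEquiv.coe_coe]
            exact claim_f2 q x (ΔR w) (theta y)
        | add y z hy hz =>
            simp only [tmul_add, map_add, hy, hz, W1Map, LinearMap.comp_apply]
      have claim_f3 : ∀ (q : P) (c : A) (t' : P ⊗[k] A),
          (LinearMap.lTensor (P ⊗[k] A) (LinearMap.mul' k A))
            ((TensorProduct.tensorTensorTensorComm k P A A A)
              ((LinearMap.rTensor (A ⊗[k] A)
                  (TensorProduct.map (LinearMap.mulRight k q) LinearMap.id))
                (t' ⊗ₜ (c ⊗ₜ (1 : A)))))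
          = G3Map (t' ⊗ₜ (q ⊗ₜ c)) := by
        intro q c t'
        induction t' with
        | zero => simp
        | tmul p b => simp
        | add y z hy hz => simp only [add_tmul, map_add, hy, hz]
      have claim_f : ∀ t : P ⊗[k] A,
          G5 ((TensorProduct.map LinearMap.id (theta (k := k) (A := A)))
            ((TensorProduct.assoc k P A A).symm
              ((TensorProduct.map LinearMap.id Coalgebra.comul) t)))
          = G3Map (ΔR w ⊗ₜ t) := by
        intro t
        induction t with
        | zero => simp
        | tmul q c =>
            rw [TensorProduct.map_tmul, LinearMap.id_apply, claim_f1 q (Coalgebra.comul c),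
              core4 c]
            exact claim_f3 q c (ΔR w)
        | add y z hy hz => simp only [map_add, hy, hz, tmul_add]
      rw [lhs, chi_tmul, claim_e (ΔR v), step_h]
      exact (claim_f (ΔR v)).symm
  | add x y hx hy => simp only [map_add, hx, hy]

/-- `K₁ : z ⊗ y ↦ z (1 ⊗ S y)`. -/
noncomputable def K1Map : (P ⊗[k] A) ⊗[k] A →ₗ[k] P ⊗[k] A :=
  LinearMap.mul' k (P ⊗[k] A) ∘ₗ
    TensorProduct.map LinearMap.id (iotaS : A →ₗ[k] P ⊗[k] A)

@[simp] lemma K1Map_tmul (z : P ⊗[k] A) (y : A) :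
    K1Map (z ⊗ₜ y) = z * ((1 : P) ⊗ₜ HopfAlgebra.antipode (R := k) y) := rfl

lemma lambda_eval
    (hcounit : ∀ u : P,
      TensorProduct.map LinearMap.id Coalgebra.counit (ΔR u) = u ⊗ₜ (1 : k))
    (hcoassoc : ∀ u : P, TensorProduct.map ΔR LinearMap.id (ΔR u)
      = (TensorProduct.assoc k P A A).symm
          (TensorProduct.map LinearMap.id Coalgebra.comul (ΔR u)))
    (F : P →ₗ[k] P) (x : P ⊗[k] P) :
    K1Map ((LinearMap.rTensor A (Hmap ΔR F)) ((TensorProduct.assoc k P P A).symm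
      ((TensorProduct.map LinearMap.id ΔR) x)))
    = LinearMap.mul' k (P ⊗[k] A) (TensorProduct.map ΔR (jP ∘ₗ F) x) := by
  induction x with
  | zero => simp
  | tmul w v =>
      have aux_a : ∀ t : P ⊗[k] A,
          K1Map ((LinearMap.rTensor A (Hmap ΔR F))
            ((TensorProduct.assoc k P P A).symm (w ⊗ₜ t)))
          = ΔR w * LinearMap.mul' k (P ⊗[k] A)
              (TensorProduct.map (TensorProduct.map F LinearMap.id ∘ₗ ΔR)
                (iotaS : A →ₗ[k] P ⊗[k] A) t) := by
        intro t
        induction t with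
        | zero => simp
        | tmul q c =>
            simp only [TensorProduct.assoc_symm_tmul, LinearMap.rTensor_tmul, Hmap_tmul,
              K1Map_tmul, TensorProduct.map_tmul, LinearMap.comp_apply, iotaS_apply,
              LinearMap.mul'_apply, mul_assoc]
        | add x y hx hy => simp only [tmul_add, map_add, hx, hy, mul_add]
      have dec : ∀ t : P ⊗[k] A,
          TensorProduct.map (TensorProduct.map F LinearMap.id ∘ₗ ΔR)
            (iotaS : A →ₗ[k] P ⊗[k] A) t
          = TensorProduct.map (TensorProduct.map F LinearMap.id)
              (iotaS : A →ₗ[k] P ⊗[k] A) ((TensorProduct.map ΔR LinearMap.id) t) := by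
        intro t
        induction t with
        | zero => simp
        | tmul q c => simp
        | add x y hx hy => simp only [map_add, hx, hy]
      have aux_b2 : ∀ (q : P) (s : A ⊗[k] A),
          LinearMap.mul' k (P ⊗[k] A)
            ((TensorProduct.map (TensorProduct.map F LinearMap.id)
              (iotaS : A →ₗ[k] P ⊗[k] A)) ((TensorProduct.assoc k P A A).symm (q ⊗ₜ s)))
          = F q ⊗ₜ (LinearMap.mul' k A
              ((TensorProduct.map LinearMap.id (HopfAlgebra.antipode (R := k))) s)) := by
        intro q s
        induction s with
        | zero => simp
        | tmul x y => simp [Algebra.TensorProduct.tmul_mul_tmul]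
        | add x y hx hy => simp only [tmul_add, map_add, hx, hy]
      have aux_b : ∀ t : P ⊗[k] A,
          LinearMap.mul' k (P ⊗[k] A)
            ((TensorProduct.map (TensorProduct.map F LinearMap.id)
              (iotaS : A →ₗ[k] P ⊗[k] A)) ((TensorProduct.assoc k P A A).symm
                ((TensorProduct.map LinearMap.id Coalgebra.comul) t)))
          = jP (F (TensorProduct.rid k P
              ((TensorProduct.map LinearMap.id Coalgebra.counit) t))) := by
        intro t
        induction t with
        | zero => simp
        | tmul q c =>
            rw [TensorProduct.map_tmul, LinearMap.id_apply, aux_b2 q (Coalgebra.comul c)]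
            have : LinearMap.mul' k A ((TensorProduct.map LinearMap.id
                (HopfAlgebra.antipode (R := k))) (Coalgebra.comul c))
                = algebraMap k A (Coalgebra.counit c) :=
              HopfAlgebra.mul_antipode_lTensor_comul_apply c
            rw [this, TensorProduct.map_tmul, LinearMap.id_apply, TensorProduct.rid_tmul,
              Algebra.algebraMap_eq_smul_one, tmul_smul, map_smul, map_smul, jP_apply,
              smul_tmul']
        | add x y hx hy => simp only [map_add, hx, hy]
      rw [TensorProduct.map_tmul, LinearMap.id_apply, aux_a (ΔR v), dec, hcoassoc v,
        aux_b (ΔR v), hcounit v, TensorProduct.rid_tmul, one_smul, TensorProduct.map_tmul]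
      rfl
  | add x y hx hy => simp only [map_add, hx, hy]

lemma Lambda_as_rTensor (F : P →ₗ[k] P) (x : P ⊗[k] P) :
    LinearMap.mul' k (P ⊗[k] A) (TensorProduct.map ΔR (jP ∘ₗ F) x)
      = (LinearMap.rTensor A (muF F)) (permMap ((LinearMap.rTensor P ΔR) x)) := by
  induction x with
  | zero => simp
  | tmul w v =>
      have aux : ∀ t : P ⊗[k] A,
          t * (F v ⊗ₜ (1 : A)) = (LinearMap.rTensor A (muF F)) (permMap (t ⊗ₜ v)) := by
        intro t
        induction t with
        | zero => simp
        | tmul p b => simp [Algebra.TensorProduct.tmul_mul_tmul]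
        | add x y hx hy => simp only [add_mul, add_tmul, map_add, hx, hy]
      rw [TensorProduct.map_tmul, LinearMap.rTensor_tmul, LinearMap.mul'_apply,
        LinearMap.comp_apply, jP_apply, aux (ΔR w)]
  | add x y hx hy => simp only [map_add, hx, hy]

lemma Omega_one_tmul (hone : ΔR 1 = 1) (a : A) :
    OmegaMap ΔR ((1 : P) ⊗ₜ a)
      = (TensorProduct.map (iota : A →ₗ[k] P ⊗[k] A) LinearMap.id)
          (theta (k := k) (A := A) a) := by
  rw [OmegaMap_tmul, hone, Algebra.TensorProduct.one_def]
  generalize theta (k := k) (A := A) a = r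
  induction r with
  | zero => simp
  | tmul m n => simp
  | add x y hx hy => simp only [tmul_add, map_add, hx, hy]

lemma conv_iotaS_hat (g : A →ₗ[k] P) (a : A) :
    conv k (iotaS : A →ₗ[k] P ⊗[k] A) (hatP g) a
      = (TensorProduct.map g LinearMap.id) (theta (k := k) (A := A) a) := by
  obtain r := Coalgebra.Repr.arbitrary k a
  rw [conv_eq_sum _ _ r, theta_apply, ← r.eq]
  rw [map_sum, map_sum, map_sum]
  refine Finset.sum_congr rfl fun i _ => ?_
  simp [Algebra.TensorProduct.tmul_mul_tmul]

lemma rTensor_map_iota (T : P ⊗[k] A →ₗ[k] P) (s' : A ⊗[k] A) :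
    (LinearMap.rTensor A T) ((TensorProduct.map (iota : A →ₗ[k] P ⊗[k] A) LinearMap.id) s')
      = (TensorProduct.map (T ∘ₗ (iota : A →ₗ[k] P ⊗[k] A)) LinearMap.id) s' := by
  induction s' with
  | zero => simp
  | tmul x y => simp
  | add x y hx hy => simp only [map_add, hx, hy]

end CovB

section PsiCov

variable (hcounit : ∀ u : P,
    TensorProduct.map LinearMap.id Coalgebra.counit (ΔR u) = u ⊗ₜ (1 : k))
  (hcoassoc : ∀ u : P, TensorProduct.map ΔR LinearMap.id (ΔR u)
    = (TensorProduct.assoc k P A A).symm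
        (TensorProduct.map LinearMap.id Coalgebra.comul (ΔR u)))
  (hone : ΔR 1 = 1)
  (hmul : ∀ u v : P, ΔR (u * v) = ΔR u * ΔR v)
  (hexact : LinearMap.ker (chiMap k A P ΔR) ⊓ LinearMap.ker (LinearMap.mul' k P)
      = PB2P k A P ΔR)
  {s : P ⊗[k] A →ₗ[k] P ⊗[k] P} (hs : chiMap k A P ΔR ∘ₗ s = LinearMap.id)
  (σ : A →ₗ[k] P ⊗[k] P)
  (hσ : ∀ a : A, chiMap k A P ΔR (σ a) = (1 : P) ⊗ₜ a)

include hcounit hcoassoc hone hmul hexact hs hσ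

lemma Psi_covariant (F : P →ₗ[k] P)
    (hFB : ∀ b : P, ΔR b = b ⊗ₜ 1 → ∀ u : P, F (b * u) = b * F u)
    (hFint : ∀ u : P, ΔR (F u) = TensorProduct.map F LinearMap.id (ΔR u)) :
    ΔR ∘ₗ Psi σ F = TensorProduct.map (Psi σ F) LinearMap.id ∘ₗ adCoaction k A := by
  have hfacmu := factor_through_chi ΔR hcounit hexact (muF F) (muF_kills ΔR F hFB) hs
  have hfacH := factor_through_chi ΔR hcounit hexact (Hmap ΔR F)
    (Hmap_kills ΔR F hmul hFB) hs
  have hbar_f : ∀ b : A, muF F (s ((1 : P) ⊗ₜ b)) = Psi σ F b := by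
    intro b
    rw [← hσ b, ← hfacmu (σ b)]
    rfl
  have hH1 : ∀ x : P ⊗[k] P, ΔR (muF F x) = Hmap ΔR F x := by
    intro x
    induction x with
    | zero => simp
    | tmul u v => rw [muF_tmul, hmul, Hmap_tmul, hFint v]
    | add x y hx hy => simp only [map_add, hx, hy]
  have hHbar : ∀ b : A, Hmap ΔR F (s ((1 : P) ⊗ₜ b)) = ΔR (Psi σ F b) := by
    intro b
    rw [← hσ b, ← hfacH (σ b), ← hH1 (σ b)]
    rfl
  have IDb : ∀ a : A,
      LinearMap.mul' k (P ⊗[k] A) (TensorProduct.map ΔR (jP ∘ₗ F) (σ a))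
      = conv k (ΔR ∘ₗ Psi σ F) (iotaS : A →ₗ[k] P ⊗[k] A) a := by
    intro a
    have h1 := Lchi ΔR hcoassoc (σ a)
    rw [hσ a] at h1
    have h2 := congrArg (K1Map ∘ₗ LinearMap.rTensor A (Hmap ΔR F ∘ₗ s)) h1
    simp only [LinearMap.comp_apply] at h2
    have hfactH : ((Hmap ΔR F ∘ₗ s) ∘ₗ chiMap k A P ΔR) = Hmap ΔR F :=
      LinearMap.ext fun x => by
        rw [LinearMap.comp_apply, LinearMap.comp_apply]
        exact (hfacH x).symm
    rw [← LinearMap.comp_apply (LinearMap.rTensor A (Hmap ΔR F ∘ₗ s))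
      (LinearMap.rTensor A (chiMap k A P ΔR)), ← LinearMap.rTensor_comp, hfactH,
      lambda_eval ΔR hcounit hcoassoc F (σ a)] at h2
    have hR : ∀ s2 : A ⊗[k] A,
        K1Map ((LinearMap.rTensor A (Hmap ΔR F ∘ₗ s))
          ((TensorProduct.assoc k P A A).symm ((1 : P) ⊗ₜ s2)))
        = LinearMap.mul' k (P ⊗[k] A)
            (TensorProduct.map (ΔR ∘ₗ Psi σ F) (iotaS : A →ₗ[k] P ⊗[k] A) s2) := by
      intro s2
      induction s2 with
      | zero => simp
      | tmul x y =>
          simp only [TensorProduct.assoc_symm_tmul, LinearMap.rTensor_tmul,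
            LinearMap.comp_apply, K1Map_tmul, TensorProduct.map_tmul, iotaS_apply,
            LinearMap.mul'_apply]
          rw [hHbar x]
      | add x y hx hy => simp only [tmul_add, map_add, hx, hy]
    rw [TensorProduct.map_tmul, LinearMap.id_apply, hR (Coalgebra.comul a)] at h2
    exact h2
  have hC1 : ∀ a : A,
      LinearMap.mul' k (P ⊗[k] A) (TensorProduct.map ΔR (jP ∘ₗ F) (σ a))
      = conv k (iotaS : A →ₗ[k] P ⊗[k] A) (hatP (Psi σ F)) a := by
    intro a
    have hmufact : muF (k := k) F = (muF F ∘ₗ s) ∘ₗ chiMap k A P ΔR :=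
      LinearMap.ext fun x => by
        rw [LinearMap.comp_apply, LinearMap.comp_apply]
        exact hfacmu x
    rw [Lambda_as_rTensor ΔR F (σ a), hmufact, LinearMap.rTensor_comp,
      LinearMap.comp_apply, Lambda0_eq ΔR hcoassoc hmul (σ a), hσ a,
      Omega_one_tmul ΔR hone a, rTensor_map_iota, conv_iotaS_hat]
    have hcomp : (muF F ∘ₗ s) ∘ₗ (iota : A →ₗ[k] P ⊗[k] A) = Psi σ F :=
      LinearMap.ext fun b => by
        rw [LinearMap.comp_apply, LinearMap.comp_apply]
        exact hbar_f b
    rw [hcomp]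
  have keyS : conv k (ΔR ∘ₗ Psi σ F) (iotaS : A →ₗ[k] P ⊗[k] A)
      = conv k (iotaS : A →ₗ[k] P ⊗[k] A) (hatP (Psi σ F)) :=
    LinearMap.ext fun a => by rw [← IDb a, hC1 a]
  have final : ΔR ∘ₗ Psi σ F
      = conv k (conv k (ΔR ∘ₗ Psi σ F) (iotaS : A →ₗ[k] P ⊗[k] A))
          (iota : A →ₗ[k] P ⊗[k] A) := by
    rw [conv_assoc, conv_iotaS_iota, conv_one_right]
  rw [final, keyS]
  exact (keyAD (Psi σ F)).symm

end PsiCov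

end QPB

/-- Proposition 5.2: vertical automorphisms of a quantum principal bundle `P(B,A)`
(left `B`-module automorphisms `F` with `F(1) = 1` intertwining `Δ_R`) are in
bijective correspondence with convolution invertible unital `Ad`-covariant maps
`f : A → P`; the correspondence is `f ↦ id * f` with inverse
`F ↦ mult ∘ (id ⊗_B F) ∘ τ` (here `σ` is any lift of the translation map `τ`). -/
theorem vertical_automorphisms_equiv_ad_covariant_maps
    (ΔR : P →ₗ[k] P ⊗[k] A)
    (hcounit : ∀ u : P, TensorProduct.map LinearMap.id Coalgebra.counit (ΔR u) = u ⊗ₜ (1 : k))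
    (hcoassoc : ∀ u : P, TensorProduct.map ΔR LinearMap.id (ΔR u)
      = (TensorProduct.assoc k P A A).symm (TensorProduct.map LinearMap.id Coalgebra.comul (ΔR u)))
    (hone : ΔR 1 = 1)
    (hmul : ∀ u v : P, ΔR (u * v) = ΔR u * ΔR v)
    (hfree : Function.Surjective (chiMap k A P ΔR))
    (hexact : LinearMap.ker (chiMap k A P ΔR) ⊓ LinearMap.ker (LinearMap.mul' k P)
      = PB2P k A P ΔR)
    (σ : A →ₗ[k] P ⊗[k] P)
    (hσ : ∀ a : A, chiMap k A P ΔR (σ a) = (1 : P) ⊗ₜ a) :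
    ∃ e : {f : A →ₗ[k] P // f 1 = 1 ∧
            (∃ g, conv k f g = convOne k ∧ conv k g f = convOne k) ∧
            ∀ a : A, ΔR (f a) = TensorProduct.map f LinearMap.id (adCoaction k A a)} ≃
          {F : P →ₗ[k] P // Function.Bijective F ∧ F 1 = 1 ∧
            (∀ b : P, ΔR b = b ⊗ₜ 1 → ∀ u : P, F (b * u) = b * F u) ∧
            ∀ u : P, ΔR (F u) = TensorProduct.map F LinearMap.id (ΔR u)},
      (∀ f (u : P), ((e f) : P →ₗ[k] P) u
        = LinearMap.mul' k P (TensorProduct.map LinearMap.id f.1 (ΔR u))) ∧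
      (∀ F (a : A), ((e.symm F) : A →ₗ[k] P) a
        = LinearMap.mul' k P (TensorProduct.map LinearMap.id F.1 (σ a))) := by
  classical
  obtain ⟨s, hs⟩ := (chiMap k A P ΔR).exists_rightInverse_of_surjective
    (LinearMap.range_eq_top.2 hfree)
  let toF : {f : A →ₗ[k] P // f 1 = 1 ∧
      (∃ g, conv k f g = convOne k ∧ conv k g f = convOne k) ∧
      ∀ a : A, ΔR (f a) = TensorProduct.map f LinearMap.id (adCoaction k A a)} →
    {F : P →ₗ[k] P // Function.Bijective F ∧ F 1 = 1 ∧
      (∀ b : P, ΔR b = b ⊗ₜ 1 → ∀ u : P, F (b * u) = b * F u) ∧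
      ∀ u : P, ΔR (F u) = TensorProduct.map F LinearMap.id (ΔR u)} := fun f =>
    ⟨QPB.Phi ΔR f.1, by
      obtain ⟨hf1, ⟨g, hfg, hgf⟩, hcovpt⟩ := f.2
      have hcovM : ΔR ∘ₗ f.1 = TensorProduct.map f.1 LinearMap.id ∘ₗ adCoaction k A :=
        LinearMap.ext hcovpt
      have hgcovM := QPB.cov_inv ΔR hmul hone f.1 g hfg hgf hcovM
      have hfi := fun u => QPB.Phi_intertwines ΔR hcoassoc hmul f.1 hcovM u
      have hgi := fun u => QPB.Phi_intertwines ΔR hcoassoc hmul g hgcovM u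
      refine ⟨?_, QPB.Phi_one ΔR hone f.1 hf1,
        fun b hb u => QPB.Phi_Blinear ΔR hmul f.1 b hb u, hfi⟩
      have h1 : ∀ u, QPB.Phi ΔR g (QPB.Phi ΔR f.1 u) = u := fun u => by
        rw [QPB.Phi_comp ΔR hcoassoc g f.1 hfi u, hfg]
        exact QPB.Phi_convOne ΔR hcounit u
      have h2 : ∀ u, QPB.Phi ΔR f.1 (QPB.Phi ΔR g u) = u := fun u => by
        rw [QPB.Phi_comp ΔR hcoassoc f.1 g hgi u, hgf]
        exact QPB.Phi_convOne ΔR hcounit u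
      exact Function.bijective_iff_has_inverse.2 ⟨QPB.Phi ΔR g, h1, h2⟩⟩
  let invF : {F : P →ₗ[k] P // Function.Bijective F ∧ F 1 = 1 ∧
      (∀ b : P, ΔR b = b ⊗ₜ 1 → ∀ u : P, F (b * u) = b * F u) ∧
      ∀ u : P, ΔR (F u) = TensorProduct.map F LinearMap.id (ΔR u)} →
    {f : A →ₗ[k] P // f 1 = 1 ∧
      (∃ g, conv k f g = convOne k ∧ conv k g f = convOne k) ∧
      ∀ a : A, ΔR (f a) = TensorProduct.map f LinearMap.id (adCoaction k A a)} := fun F =>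
    ⟨QPB.Psi σ F.1, by
      obtain ⟨hbij, hF1, hFB, hFint⟩ := F.2
      have hcovPsi := QPB.Psi_covariant ΔR hcounit hcoassoc hone hmul hexact hs σ hσ
        F.1 hFB hFint
      refine ⟨QPB.Psi_one ΔR hcounit hexact hs σ hσ hone F.1 hFB hF1, ?_,
        fun a => LinearMap.congr_fun hcovPsi a⟩
      set e := LinearEquiv.ofBijective F.1 hbij with he
      set Fi : P →ₗ[k] P := (e.symm : P →ₗ[k] P) with hFi
      have hFiF : ∀ u, Fi (F.1 u) = u := fun u => e.symm_apply_apply u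
      have hFFi : ∀ u, F.1 (Fi u) = u := fun u => e.apply_symm_apply u
      have hFi1 : Fi 1 = 1 := by
        conv_lhs => rw [← hF1]
        exact hFiF 1
      have hFiB : ∀ b : P, ΔR b = b ⊗ₜ 1 → ∀ u : P, Fi (b * u) = b * Fi u := by
        intro b hb u
        apply hbij.1
        rw [hFFi, hFB b hb (Fi u), hFFi]
      have hFiInt : ∀ u, ΔR (Fi u) = TensorProduct.map Fi LinearMap.id (ΔR u) := by
        intro u
        have hinj : Function.Injective
            (TensorProduct.map F.1 (LinearMap.id : A →ₗ[k] A)) := by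
          have hcongr : TensorProduct.map F.1 (LinearMap.id : A →ₗ[k] A)
              = (TensorProduct.congr e (LinearEquiv.refl k A)).toLinearMap := rfl
          rw [hcongr]
          exact (TensorProduct.congr e (LinearEquiv.refl k A)).injective
        apply hinj
        have h1 : TensorProduct.map F.1 LinearMap.id (ΔR (Fi u)) = ΔR u := by
          rw [← hFint (Fi u), hFFi]
        have h2 : ∀ t : P ⊗[k] A, TensorProduct.map F.1 LinearMap.id
            (TensorProduct.map Fi LinearMap.id t) = t := by
          intro t
          induction t with
          | zero => simp
          | tmul p b => simp [hFFi]
          | add x y hx hy => simp only [map_add, hx, hy]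
        rw [h1, h2]
      have hPF : QPB.Phi ΔR (QPB.Psi σ F.1) = F.1 :=
        LinearMap.ext (QPB.PhiPsi ΔR hcounit hexact hs σ hσ F.1 hFB)
      have hPFi : QPB.Phi ΔR (QPB.Psi σ Fi) = Fi :=
        LinearMap.ext (QPB.PhiPsi ΔR hcounit hexact hs σ hσ Fi hFiB)
      have hPsiFint : ∀ u, ΔR (QPB.Phi ΔR (QPB.Psi σ F.1) u)
          = TensorProduct.map (QPB.Phi ΔR (QPB.Psi σ F.1)) LinearMap.id (ΔR u) := by
        rw [hPF]; exact hFint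
      have hPsiFiint : ∀ u, ΔR (QPB.Phi ΔR (QPB.Psi σ Fi) u)
          = TensorProduct.map (QPB.Phi ΔR (QPB.Psi σ Fi)) LinearMap.id (ΔR u) := by
        rw [hPFi]; exact hFiInt
      refine ⟨QPB.Psi σ Fi, ?_, ?_⟩
      · have hcomp : QPB.Phi ΔR (conv k (QPB.Psi σ F.1) (QPB.Psi σ Fi))
            = QPB.Phi ΔR (convOne k) := by
          refine LinearMap.ext fun u => ?_
          rw [← QPB.Phi_comp ΔR hcoassoc (QPB.Psi σ Fi) (QPB.Psi σ F.1) hPsiFint u,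
            QPB.Phi_convOne ΔR hcounit u, hPF, hPFi, hFiF]
        have h' := congrArg (QPB.Psi σ) hcomp
        rwa [QPB.PsiPhi ΔR σ hσ, QPB.PsiPhi ΔR σ hσ] at h'
      · have hcomp : QPB.Phi ΔR (conv k (QPB.Psi σ Fi) (QPB.Psi σ F.1))
            = QPB.Phi ΔR (convOne k) := by
          refine LinearMap.ext fun u => ?_
          rw [← QPB.Phi_comp ΔR hcoassoc (QPB.Psi σ F.1) (QPB.Psi σ Fi) hPsiFiint u,
            QPB.Phi_convOne ΔR hcounit u, hPF, hPFi, hFFi]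
        have h' := congrArg (QPB.Psi σ) hcomp
        rwa [QPB.PsiPhi ΔR σ hσ, QPB.PsiPhi ΔR σ hσ] at h'⟩
  have hleft : Function.LeftInverse invF toF := by
    intro f
    apply Subtype.ext
    exact QPB.PsiPhi ΔR σ hσ f.1
  have hright : Function.RightInverse invF toF := by
    intro F
    apply Subtype.ext
    exact LinearMap.ext (QPB.PhiPsi ΔR hcounit hexact hs σ hσ F.1 F.2.2.2.1)
  exact ⟨⟨toF, invF, hleft, hright⟩, fun f u => rfl, fun F a => rfl⟩
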